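/- For all n ≥ 3, defining b(n) = Σ_{compositions (i_1,...,i_k) of n} multinomial(n; i_1,...,i_k)·I(i_1)⋯I(i_k), one has the strict inequalities F_n · n! < b(n) < 2^{n-1} · n!, where F_n is the n-th Fibonacci number and I(m) is the number of involutions in S_m. -/

import Mathlib

/-- The number of involutions in the symmetric group `S_n`. -/
def invCount (n : ℕ) : ℕ :=
  Fintype.card {σ : Equiv.Perm (Fin n) // σ * σ = 1}

/-- `b(n) = ∑_{(i₁,…,i_k) ⊨ n} multinomial(n; i₁,…,i_k) · I(i₁)⋯I(i_k)`, the sum over all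
compositions of `n` into positive parts. -/
def borelCount (n : ℕ) : ℕ :=
  ∑ c : Composition n,
    Nat.multinomial Finset.univ c.blocksFun * ∏ i, invCount (c.blocksFun i)

lemma invCount_one : invCount 1 = 1 := by decide
lemma invCount_two : invCount 2 = 2 := by decide

lemma invCount_eq_factorial {m : ℕ} (h1 : 0 < m) (h2 : m ≤ 2) :
    invCount m = m.factorial := by
  interval_cases m
  · exact invCount_one
  · exact invCount_two

lemma invCount_le (n : ℕ) : invCount n ≤ n.factorial := by
  have := Fintype.card_subtype_le (fun σ : Equiv.Perm (Fin n) => σ * σ = 1)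
  simpa [invCount, Fintype.card_perm] using this

lemma invCount_lt (n : ℕ) (hn : 3 ≤ n) : invCount n < n.factorial := by
  obtain ⟨m, rfl⟩ : ∃ m, n = m + 3 := ⟨n - 3, by omega⟩
  have hne : ¬ (finRotate (m+3) * finRotate (m+3) = 1) := by
    intro h
    have h0 : (finRotate (m+3) * finRotate (m+3)) 0 = 0 := by rw [h]; rfl
    rw [Equiv.Perm.mul_apply, finRotate_succ_apply, finRotate_succ_apply] at h0
    have : ((0+1+1 : Fin (m+3)) : ℕ) = 2 := by
      rw [Fin.val_add, Fin.val_add]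
      simp [Fin.val_one]
    rw [h0] at this
    simp at this
  have := Fintype.card_subtype_lt (p := fun σ : Equiv.Perm (Fin (m+3)) => σ * σ = 1) hne
  simpa [invCount, Fintype.card_perm] using this

/-- The lists of 1s and 2s summing to `n`. -/
def twoLists : ℕ → Finset (List ℕ)
  | 0 => {[]}
  | 1 => {[1]}
  | (n+2) => ((twoLists (n+1)).image (List.cons 1)) ∪ ((twoLists n).image (List.cons 2))

lemma card_twoLists : ∀ n, (twoLists n).card = Nat.fib (n+1)
  | 0 => rfl
  | 1 => rfl
  | (n+2) => by
    rw [twoLists, Finset.card_union_of_disjoint, Finset.card_image_of_injective _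
        (List.cons_injective), Finset.card_image_of_injective _ (List.cons_injective),
        card_twoLists (n+1), card_twoLists n]
    · have h1 := Nat.fib_add_two (n := n+1)
      have h2 : n + 1 + 2 = n + 2 + 1 := rfl
      rw [h2] at h1
      omega
    · rw [Finset.disjoint_left]
      rintro l hl hl'
      simp only [Finset.mem_image] at hl hl'
      obtain ⟨a, -, rfl⟩ := hl
      obtain ⟨b, -, h⟩ := hl'
      exact absurd (List.head_eq_of_cons_eq h) (by norm_num)

lemma twoLists_mem : ∀ n, ∀ l ∈ twoLists n, l.sum = n ∧ ∀ x ∈ l, 0 < x ∧ x ≤ 2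
  | 0, l, hl => by
    simp only [twoLists, Finset.mem_singleton] at hl
    subst hl; simp
  | 1, l, hl => by
    simp only [twoLists, Finset.mem_singleton] at hl
    subst hl; simp
  | (n+2), l, hl => by
    simp only [twoLists, Finset.mem_union, Finset.mem_image] at hl
    rcases hl with ⟨a, ha, rfl⟩ | ⟨a, ha, rfl⟩
    · obtain ⟨hs, hm⟩ := twoLists_mem (n+1) a ha
      constructor
      · simp [hs]; omega
      · rintro x hx
        rcases List.mem_cons.1 hx with rfl | hx
        · omega
        · exact hm x hx
    · obtain ⟨hs, hm⟩ := twoLists_mem n a ha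
      constructor
      · simp [hs]; omega
      · rintro x hx
        rcases List.mem_cons.1 hx with rfl | hx
        · omega
        · exact hm x hx

lemma term_eq_of_small (n : ℕ) (c : Composition n) (hc : ∀ x ∈ c.blocks, x ≤ 2) :
    Nat.multinomial Finset.univ c.blocksFun * ∏ i, invCount (c.blocksFun i)
      = n.factorial := by
  have hprod : ∏ i, invCount (c.blocksFun i) = ∏ i, (c.blocksFun i).factorial := by
    refine Finset.prod_congr rfl fun i _ => ?_
    exact invCount_eq_factorial (c.blocks_pos (c.blocksFun_mem_blocks i))
      (hc _ (c.blocksFun_mem_blocks i))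
  rw [hprod, mul_comm, Nat.multinomial_spec, c.sum_blocksFun]

lemma term_le (n : ℕ) (c : Composition n) :
    Nat.multinomial Finset.univ c.blocksFun * ∏ i, invCount (c.blocksFun i)
      ≤ n.factorial := by
  calc Nat.multinomial Finset.univ c.blocksFun * ∏ i, invCount (c.blocksFun i)
      ≤ Nat.multinomial Finset.univ c.blocksFun * ∏ i, (c.blocksFun i).factorial := by
        exact Nat.mul_le_mul_left _ (Finset.prod_le_prod' fun i _ => invCount_le _)
    _ = n.factorial := by rw [mul_comm, Nat.multinomial_spec, c.sum_blocksFun]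

lemma multinomial_single (n : ℕ) (h : 0 < n) :
    Nat.multinomial Finset.univ (Composition.single n h).blocksFun = 1 := by
  have := Nat.multinomial_spec Finset.univ (Composition.single n h).blocksFun
  rw [(Composition.single n h).sum_blocksFun] at this
  have hp : ∏ i, ((Composition.single n h).blocksFun i).factorial = n.factorial := by
    rw [Finset.prod_congr rfl (fun i _ => congrArg Nat.factorial (Composition.single_blocksFun h i))]
    rw [Finset.prod_const, Finset.card_fin, Composition.single_length, pow_one]
  rw [hp] at this
  have hpos := n.factorial_pos
  nlinarith [this]

/-- For all `n ≥ 3`, `Fₙ · n! < b(n) < 2^(n-1) · n!`, where `Fₙ` is the `n`-th Fibonacci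
number (with `F₁ = F₂ = 1`). -/
theorem fib_mul_factorial_lt_borelCount_lt (n : ℕ) (hn : 3 ≤ n) :
    Nat.fib n * n.factorial < borelCount n ∧
      borelCount n < 2 ^ (n - 1) * n.factorial := by
  have hn0 : 0 < n := by omega
  constructor
  · -- lower bound
    set S : Finset (Composition n) :=
      Finset.univ.filter (fun c => ∀ x ∈ c.blocks, x ≤ 2) with hS
    have hsub : ∑ c ∈ S, (Nat.multinomial Finset.univ c.blocksFun *
        ∏ i, invCount (c.blocksFun i)) ≤ borelCount n := by
      exact Finset.sum_le_sum_of_subset (Finset.subset_univ S)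
    have hSsum : ∑ c ∈ S, (Nat.multinomial Finset.univ c.blocksFun *
        ∏ i, invCount (c.blocksFun i)) = S.card * n.factorial := by
      rw [Finset.sum_congr rfl (fun c hc => term_eq_of_small n c ?_), Finset.sum_const,
        smul_eq_mul]
      exact (Finset.mem_filter.1 hc).2
    have hcard : Nat.fib (n+1) ≤ S.card := by
      rw [← card_twoLists n]
      refine Finset.card_le_card_of_injOn
        (fun l => if h : l.sum = n ∧ ∀ x ∈ l, 0 < x then ⟨l, fun hi => h.2 _ hi, h.1⟩
          else Composition.single n hn0) ?_ ?_
      · intro l hl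
        obtain ⟨hs, hm⟩ := twoLists_mem n l hl
        have h : l.sum = n ∧ ∀ x ∈ l, 0 < x := ⟨hs, fun x hx => (hm x hx).1⟩
        simp only [dif_pos h, hS, Finset.mem_coe, Finset.mem_filter, Finset.mem_univ, true_and]
        exact fun x hx => (hm x hx).2
      · intro l₁ h₁ l₂ h₂ heq
        obtain ⟨hs₁, hm₁⟩ := twoLists_mem n l₁ h₁
        obtain ⟨hs₂, hm₂⟩ := twoLists_mem n l₂ h₂
        have hc₁ : l₁.sum = n ∧ ∀ x ∈ l₁, 0 < x := ⟨hs₁, fun x hx => (hm₁ x hx).1⟩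
        have hc₂ : l₂.sum = n ∧ ∀ x ∈ l₂, 0 < x := ⟨hs₂, fun x hx => (hm₂ x hx).1⟩
        simp only [dif_pos hc₁, dif_pos hc₂] at heq
        exact congrArg Composition.blocks heq
    have hfib : Nat.fib n < Nat.fib (n+1) := by
      have h1 : Nat.fib (n+1) = Nat.fib (n-1) + Nat.fib n := by
        have := Nat.fib_add_two (n := n - 1)
        have h2 : n - 1 + 2 = n + 1 := by omega
        have h3 : n - 1 + 1 = n := by omega
        rw [h2, h3] at this
        omega
      have h4 : 0 < Nat.fib (n-1) := Nat.fib_pos.2 (by omega)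
      omega
    calc Nat.fib n * n.factorial < Nat.fib (n+1) * n.factorial :=
          (Nat.mul_lt_mul_right n.factorial_pos).2 hfib
      _ ≤ S.card * n.factorial := Nat.mul_le_mul_right _ hcard
      _ = _ := hSsum.symm
      _ ≤ borelCount n := hsub
  · -- upper bound
    have hlt : borelCount n < ∑ _c : Composition n, n.factorial := by
      refine Finset.sum_lt_sum (fun c _ => term_le n c) ?_
      refine ⟨Composition.single n hn0, Finset.mem_univ _, ?_⟩
      rw [multinomial_single n hn0, one_mul]
      have hp : ∏ i, invCount ((Composition.single n hn0).blocksFun i) = invCount n := by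
        rw [Finset.prod_congr rfl (fun i _ => congrArg invCount (Composition.single_blocksFun hn0 i))]
        rw [Finset.prod_const, Finset.card_fin, Composition.single_length, pow_one]
      rw [hp]
      exact invCount_lt n hn
    calc borelCount n < ∑ _c : Composition n, n.factorial := hlt
      _ = 2 ^ (n - 1) * n.factorial := by
          rw [Finset.sum_const, smul_eq_mul, Finset.card_univ, composition_card]
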